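/- Let c^H_{ijkl} and ϵ^H_{ij} be the HMM effective elastic and dielectric tensors obtained from the two HMM cell problems on the cube I_δ(x_α). Then c^H is uniformly elliptic and ϵ^H is positive definite: there exist α_H > 0 and β_H > 0 such that c^H_{ijkl} X_{ij} X_{kl} ≥ α_H X_{ij} X_{ij} for every symmetric matrix X, and ϵ^H_{ij} X_i X_j ≥ β_H X_i X_i for every vector X. -/

import Mathlib

open MeasureTheory Filter

noncomputable section

/-- Partial derivative of `f` in the `j`-th coordinate direction. -/
def pd (f : (Fin 3 → ℝ) → ℝ) (j : Fin 3) (x : Fin 3 → ℝ) : ℝ :=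
  fderiv ℝ f x (Pi.single j 1)

/-- The cube `I_δ(c) = c + [-δ/2, δ/2]^3`. -/
def cube (c : Fin 3 → ℝ) (δ : ℝ) : Set (Fin 3 → ℝ) :=
  Set.univ.pi fun i => Set.Icc (c i - δ / 2) (c i + δ / 2)

/-- A model for membership in `H¹₀(s)`: differentiable, vanishing on the boundary
of `s`, with the function and its gradient square integrable on `s`. -/
def H10 (s : Set (Fin 3 → ℝ)) (f : (Fin 3 → ℝ) → ℝ) : Prop :=
  Differentiable ℝ f ∧ (∀ x ∈ frontier s, f x = 0) ∧
    IntegrableOn (fun x => f x ^ 2) s ∧ ∀ j, IntegrableOn (fun x => pd f j x ^ 2) s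

/-- Bounded measurable (i.e. `L^∞`) scalar function. -/
def BddMeas (f : (Fin 3 → ℝ) → ℝ) : Prop :=
  Measurable f ∧ ∃ M, ∀ x, |f x| ≤ M

/-- The HMM effective elastic coefficient
`c^H_{ijkl} = ⟨ c_{ijnh} ∂_h P^{kl}_n + e_{hij} ∂_h Φ_{kl} ⟩_{I_δ}`. -/
def cH (c : Fin 3 → Fin 3 → Fin 3 → Fin 3 → (Fin 3 → ℝ) → ℝ)
    (e : Fin 3 → Fin 3 → Fin 3 → (Fin 3 → ℝ) → ℝ) (s : Set (Fin 3 → ℝ))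
    (P : Fin 3 → Fin 3 → Fin 3 → (Fin 3 → ℝ) → ℝ)
    (Φ : Fin 3 → Fin 3 → (Fin 3 → ℝ) → ℝ) (i j k l : Fin 3) : ℝ :=
  ⨍ x in s, ((∑ n, ∑ h, c i j n h x * pd (P k l n) h x) + ∑ h, e h i j x * pd (Φ k l) h x)

/-- The HMM effective piezoelectric coefficient
`e^H_{ikl} = ⟨ e_{inh} ∂_h P^{kl}_n − ϵ_{ih} ∂_h Φ_{kl} ⟩_{I_δ}`. -/
def eH (e : Fin 3 → Fin 3 → Fin 3 → (Fin 3 → ℝ) → ℝ)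
    (ϵ : Fin 3 → Fin 3 → (Fin 3 → ℝ) → ℝ) (s : Set (Fin 3 → ℝ))
    (P : Fin 3 → Fin 3 → Fin 3 → (Fin 3 → ℝ) → ℝ)
    (Φ : Fin 3 → Fin 3 → (Fin 3 → ℝ) → ℝ) (i k l : Fin 3) : ℝ :=
  ⨍ x in s, ((∑ n, ∑ h, e i n h x * pd (P k l n) h x) - ∑ h, ϵ i h x * pd (Φ k l) h x)

/-- The HMM effective dielectric coefficient
`ϵ^H_{il} = −⟨ e_{inh} ∂_h Q^{l}_n − ϵ_{ih} ∂_h Ψ_l ⟩_{I_δ}`. -/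
def epsH (e : Fin 3 → Fin 3 → Fin 3 → (Fin 3 → ℝ) → ℝ)
    (ϵ : Fin 3 → Fin 3 → (Fin 3 → ℝ) → ℝ) (s : Set (Fin 3 → ℝ))
    (Q : Fin 3 → Fin 3 → (Fin 3 → ℝ) → ℝ)
    (Ψ : Fin 3 → (Fin 3 → ℝ) → ℝ) (i l : Fin 3) : ℝ :=
  -⨍ x in s, ((∑ n, ∑ h, e i n h x * pd (Q l n) h x) - ∑ h, ϵ i h x * pd (Ψ l) h x)


section Util

lemma measurable_pd (f : (Fin 3 → ℝ) → ℝ) (j : Fin 3) : Measurable (pd f j) :=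
  measurable_fderiv_apply_const ℝ f _

lemma cube_eq (xα : Fin 3 → ℝ) (δ : ℝ) :
    cube xα δ = Set.Icc (fun i => xα i - δ / 2) (fun i => xα i + δ / 2) := by
  rw [cube, Set.pi_univ_Icc]

lemma measurableSet_cube (xα : Fin 3 → ℝ) (δ : ℝ) : MeasurableSet (cube xα δ) := by
  rw [cube_eq]; exact measurableSet_Icc

lemma volume_cube_lt_top (xα : Fin 3 → ℝ) (δ : ℝ) : volume (cube xα δ) < ⊤ := by
  rw [cube_eq]
  exact (IsCompact.measure_lt_top isCompact_Icc)

lemma volume_cube_pos (xα : Fin 3 → ℝ) {δ : ℝ} (hδ : 0 < δ) : 0 < volume (cube xα δ) := by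
  apply MeasureTheory.Measure.measure_pos_of_nonempty_interior
  rw [cube, interior_pi_set Set.finite_univ]
  refine ⟨xα, fun i _ => ?_⟩
  simp only [interior_Icc, Set.mem_Ioo]
  constructor <;> linarith

lemma mcube_pos (xα : Fin 3 → ℝ) {δ : ℝ} (hδ : 0 < δ) :
    0 < (volume (cube xα δ)).toReal :=
  ENNReal.toReal_pos (volume_cube_pos xα hδ).ne' (volume_cube_lt_top xα δ).ne

/-- convenient: square-integrable measurable function on `s`. -/
def L2 (s : Set (Fin 3 → ℝ)) (f : (Fin 3 → ℝ) → ℝ) : Prop :=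
  Measurable f ∧ IntegrableOn (fun x => f x ^ 2) s

lemma L2.zero {s : Set (Fin 3 → ℝ)} : L2 s (fun _ => (0:ℝ)) :=
  ⟨measurable_const, by
    simpa using (MeasureTheory.integrableOn_zero :
      IntegrableOn (fun _ => (0:ℝ)) s volume)⟩

lemma L2.integrableOn {s f} (hf : L2 s f) (hs : volume s < ⊤) : IntegrableOn f s := by
  have hb : IntegrableOn (fun x => 1 + f x ^ 2) s := by
    exact ((integrableOn_const_iff (C := (1:ℝ))).2 (Or.inr hs)).add hf.2
  refine Integrable.mono' hb hf.1.aestronglyMeasurable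
    (Filter.Eventually.of_forall fun x => ?_)
  simp only [Real.norm_eq_abs]
  nlinarith [sq_nonneg (|f x| - 1), sq_abs (f x), abs_nonneg (f x)]

lemma L2.mul {s f g} (hf : L2 s f) (hg : L2 s g) :
    IntegrableOn (fun x => f x * g x) s := by
  have hb : IntegrableOn (fun x => f x ^ 2 + g x ^ 2) s := hf.2.add hg.2
  refine Integrable.mono' hb (hf.1.mul hg.1).aestronglyMeasurable
    (Filter.Eventually.of_forall fun x => ?_)
  simp only [Real.norm_eq_abs]
  rw [abs_mul]
  nlinarith [sq_nonneg (|f x| - |g x|), sq_abs (f x), sq_abs (g x), abs_nonneg (f x),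
    abs_nonneg (g x)]

lemma L2.add {s f g} (hf : L2 s f) (hg : L2 s g) : L2 s (fun x => f x + g x) := by
  refine ⟨hf.1.add hg.1, ?_⟩
  have hb : IntegrableOn (fun x => 2 * f x ^ 2 + 2 * g x ^ 2) s :=
    (hf.2.const_mul 2).add (hg.2.const_mul 2)
  refine Integrable.mono' hb ((hf.1.add hg.1).pow_const 2).aestronglyMeasurable
    (Filter.Eventually.of_forall fun x => ?_)
  simp only [Real.norm_eq_abs, abs_pow]
  nlinarith [sq_nonneg (f x - g x), sq_abs (f x + g x)]

lemma L2.const_mul {s f} (hf : L2 s f) (r : ℝ) : L2 s (fun x => r * f x) := by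
  refine ⟨hf.1.const_mul r, ?_⟩
  have : (fun x => (r * f x) ^ 2) = fun x => r ^ 2 * f x ^ 2 := by
    funext x; ring
  rw [this]
  exact hf.2.const_mul _

lemma L2.const (s : Set (Fin 3 → ℝ)) (hs : volume s < ⊤) (r : ℝ) :
    L2 s (fun _ => r) :=
  ⟨measurable_const, (integrableOn_const_iff (C := r ^ 2)).2 (Or.inr hs)⟩

lemma L2.bddMul {s f b} (hb : BddMeas b) (hf : L2 s f) :
    L2 s (fun x => b x * f x) := by
  obtain ⟨hbm, M, hM⟩ := hb
  refine ⟨hbm.mul hf.1, ?_⟩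
  refine Integrable.mono' (hf.2.const_mul (M ^ 2))
    (((hbm.mul hf.1).pow_const 2).aestronglyMeasurable)
    (Filter.Eventually.of_forall fun x => ?_)
  have h3 : |b x| ^ 2 ≤ M ^ 2 := by nlinarith [hM x, abs_nonneg (b x)]
  simp only [Real.norm_eq_abs, abs_pow]
  calc |b x * f x| ^ 2 = |b x| ^ 2 * |f x| ^ 2 := by rw [abs_mul]; ring
    _ ≤ M ^ 2 * |f x| ^ 2 := mul_le_mul_of_nonneg_right h3 (sq_nonneg _)
    _ = M ^ 2 * f x ^ 2 := by rw [sq_abs]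

lemma L2.sum {s} {ι : Type*} (A : Finset ι) (f : ι → (Fin 3 → ℝ) → ℝ)
    (h : ∀ i ∈ A, L2 s (f i)) : L2 s (fun x => ∑ i ∈ A, f i x) := by
  classical
  induction A using Finset.induction with
  | empty => simpa using L2.zero
  | @insert a A' hx ih =>
    simp only [Finset.sum_insert hx]
    exact L2.add (h a (Finset.mem_insert_self a A'))
      (ih fun i hi => h i (Finset.mem_insert_of_mem hi))

end Util
section PD

lemma pd_add {f g : (Fin 3 → ℝ) → ℝ} (hf : Differentiable ℝ f) (hg : Differentiable ℝ g)
    (j : Fin 3) (x : Fin 3 → ℝ) :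
    pd (fun y => f y + g y) j x = pd f j x + pd g j x := by
  simp only [pd, fderiv_fun_add (hf x) (hg x)]
  simp

lemma pd_const_mul {f : (Fin 3 → ℝ) → ℝ} (hf : Differentiable ℝ f) (r : ℝ)
    (j : Fin 3) (x : Fin 3 → ℝ) :
    pd (fun y => r * f y) j x = r * pd f j x := by
  simp only [pd, fderiv_const_mul (hf x) r]
  simp

lemma differentiable_coord (l : Fin 3) : Differentiable ℝ (fun x : Fin 3 → ℝ => x l) :=
  fun x => ((ContinuousLinearMap.proj l : (Fin 3 → ℝ) →L[ℝ] ℝ).differentiableAt)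

lemma pd_coord (l j : Fin 3) (x : Fin 3 → ℝ) :
    pd (fun y : Fin 3 → ℝ => y l) j x = if l = j then 1 else 0 := by
  have h : (fun y : Fin 3 → ℝ => y l) = ⇑(ContinuousLinearMap.proj l (R := ℝ) (φ := fun _ : Fin 3 => ℝ)) := rfl
  rw [pd, h, ContinuousLinearMap.fderiv]
  simp [ContinuousLinearMap.proj_apply, Pi.single_apply]

lemma pd_sum {ι : Type*} (A : Finset ι) (f : ι → (Fin 3 → ℝ) → ℝ)
    (hf : ∀ i ∈ A, Differentiable ℝ (f i)) (j : Fin 3) (x : Fin 3 → ℝ) :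
    pd (fun y => ∑ i ∈ A, f i y) j x = ∑ i ∈ A, pd (f i) j x := by
  classical
  induction A using Finset.induction with
  | empty => simp [pd]
  | @insert a A' hx ih =>
    have hfa : Differentiable ℝ (f a) := hf a (Finset.mem_insert_self a A')
    have hfs : Differentiable ℝ (fun y => ∑ i ∈ A', f i y) := by
      apply Differentiable.fun_sum fun i hi => hf i (Finset.mem_insert_of_mem hi)
    have : (fun y => ∑ i ∈ insert a A', f i y) = fun y => f a y + ∑ i ∈ A', f i y := by
      funext y; rw [Finset.sum_insert hx]
    rw [this, pd_add hfa hfs, Finset.sum_insert hx,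
      ih fun i hi => hf i (Finset.mem_insert_of_mem hi)]

end PD

section H10closure

lemma H10.l2 {s f} (hf : H10 s f) : L2 s f :=
  ⟨hf.1.continuous.measurable, hf.2.2.1⟩

lemma H10.l2pd {s f} (hf : H10 s f) (j : Fin 3) : L2 s (pd f j) :=
  ⟨measurable_pd f j, hf.2.2.2 j⟩

lemma H10.zero {s : Set (Fin 3 → ℝ)} : H10 s (fun _ => (0:ℝ)) := by
  refine ⟨differentiable_const 0, fun x _ => rfl, L2.zero.2, fun j => ?_⟩
  have : ∀ x, pd (fun _ : Fin 3 → ℝ => (0:ℝ)) j x = 0 := by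
    intro x; simp [pd]
  simpa [this] using L2.zero.2

lemma H10.add {s f g} (hf : H10 s f) (hg : H10 s g) : H10 s (fun x => f x + g x) := by
  refine ⟨hf.1.add hg.1, fun x hx => by show f x + g x = 0; rw [hf.2.1 x hx, hg.2.1 x hx, add_zero],
    (hf.l2.add hg.l2).2, fun j => ?_⟩
  have : ∀ x, pd (fun y => f y + g y) j x = pd f j x + pd g j x :=
    fun x => pd_add hf.1 hg.1 j x
  have he : (fun x => pd (fun y => f y + g y) j x ^ 2)
      = fun x => (pd f j x + pd g j x) ^ 2 := by funext x; rw [this]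
  rw [he]
  exact ((hf.l2pd j).add (hg.l2pd j)).2

lemma H10.const_mul {s f} (hf : H10 s f) (r : ℝ) : H10 s (fun x => r * f x) := by
  refine ⟨hf.1.const_mul r, fun x hx => by show r * f x = 0; rw [hf.2.1 x hx, mul_zero],
    (hf.l2.const_mul r).2, fun j => ?_⟩
  have he : (fun x => pd (fun y => r * f y) j x ^ 2)
      = fun x => (r * pd f j x) ^ 2 := by
    funext x; rw [pd_const_mul hf.1 r j x]
  rw [he]
  exact ((hf.l2pd j).const_mul r).2

lemma H10.sum {s} {ι : Type*} (A : Finset ι) (f : ι → (Fin 3 → ℝ) → ℝ)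
    (h : ∀ i ∈ A, H10 s (f i)) : H10 s (fun x => ∑ i ∈ A, f i x) := by
  classical
  induction A using Finset.induction with
  | empty => simpa using H10.zero
  | @insert a A' hx ih =>
    simp only [Finset.sum_insert hx]
    exact H10.add (h a (Finset.mem_insert_self a A'))
      (ih fun i hi => h i (Finset.mem_insert_of_mem hi))

end H10closure
section MeanZero

open Set in
/-- Integral of a partial derivative of an `H¹₀` function over the cube vanishes. -/
lemma integral_pd_eq_zero (xα : Fin 3 → ℝ) {δ : ℝ} (hδ : 0 < δ)
    {w : (Fin 3 → ℝ) → ℝ} (hw : H10 (cube xα δ) w) (j : Fin 3) :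
    ∫ x in cube xα δ, pd w j x = 0 := by
  set a : Fin 3 → ℝ := fun i => xα i - δ / 2 with ha
  set b : Fin 3 → ℝ := fun i => xα i + δ / 2 with hb
  have hab : ∀ i, a i < b i := fun i => by simp only [ha, hb]; linarith
  have hle : a ≤ b := fun i => (hab i).le
  have hcube : cube xα δ = Icc a b := cube_eq xα δ
  -- frontier facts
  have hfront : ∀ p : Fin 3 → ℝ, p ∈ Icc a b → (∃ i, p i = a i ∨ p i = b i) →
      p ∈ frontier (cube xα δ) := by
    intro p hp ⟨i, hi⟩
    rw [hcube, frontier, isClosed_Icc.closure_eq]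
    refine ⟨hp, fun hint => ?_⟩
    rw [← pi_univ_Icc, interior_pi_set finite_univ] at hint
    have := hint i (mem_univ i)
    simp only [Function.comp, interior_Icc, mem_Ioo] at this
    rcases hi with hi | hi <;> rw [hi] at this <;>
      [exact lt_irrefl _ this.1; exact lt_irrefl _ this.2]
  -- the vector field
  set f : Fin 3 → (Fin 3 → ℝ) → ℝ := fun i x => if i = j then w x else 0 with hf
  set f' : Fin 3 → (Fin 3 → ℝ) → (Fin 3 → ℝ) →L[ℝ] ℝ :=
    fun i x => if i = j then fderiv ℝ w x else 0 with hf'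
  have hdiv : ∀ x, (∑ i, f' i x (Pi.single i 1)) = pd w j x := by
    intro x
    rw [Finset.sum_eq_single j]
    · simp [hf', pd]
    · intro i _ hij; simp [hf', hij]
    · intro h; exact absurd (Finset.mem_univ j) h
  have Hi : MeasureTheory.IntegrableOn (fun x => ∑ i, f' i x (Pi.single i 1)) (Icc a b) := by
    have : (fun x => ∑ i, f' i x (Pi.single i 1)) = pd w j := funext hdiv
    rw [this, ← hcube]
    exact (hw.l2pd j).integrableOn (volume_cube_lt_top xα δ)
  have key := MeasureTheory.integral_divergence_of_hasFDerivAt_off_countable'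
    (n := 2) a b hle f f' ∅ countable_empty
    (fun i => by
      by_cases hij : i = j
      · simpa [hf, hij] using hw.1.continuous.continuousOn
      · simp only [hf, if_neg hij]; exact continuousOn_const)
    (fun x _ i => by
      by_cases hij : i = j
      · simpa [hf, hf', hij] using (hw.1 x).hasFDerivAt
      · simp only [hf, hf', if_neg hij]; exact hasFDerivAt_const 0 x)
    Hi
  have hdivint : (∫ x in Icc a b, pd w j x)
      = ∫ x in Icc a b, ∑ i, f' i x (Pi.single i 1) := by
    congr 1; exact (funext hdiv).symm
  rw [hcube, hdivint, key]
  apply Finset.sum_eq_zero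
  intro i _
  have hface : ∀ (ci : ℝ), (ci = a i ∨ ci = b i) →
      (∫ x in Icc (a ∘ i.succAbove) (b ∘ i.succAbove), f i (i.insertNth ci x)) = 0 := by
    intro ci hci
    by_cases hij : i = j
    · apply MeasureTheory.setIntegral_eq_zero_of_forall_eq_zero
      intro x hx
      have hmem : i.insertNth ci x ∈ Icc a b := by
        refine Fin.insertNth_mem_Icc.2 ⟨?_, hx⟩
        rcases hci with h | h <;> rw [h]
        · exact ⟨le_refl _, (hab i).le⟩
        · exact ⟨(hab i).le, le_refl _⟩
      have : i.insertNth ci x ∈ frontier (cube xα δ) := by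
        refine hfront _ hmem ⟨i, ?_⟩
        rcases hci with h | h
        · left; rw [Fin.insertNth_apply_same, h]
        · right; rw [Fin.insertNth_apply_same, h]
      simp only [hf, if_pos hij]
      exact hw.2.1 _ this
    · simp only [hf, if_neg hij]
      simp
  rw [hface (b i) (Or.inr rfl), hface (a i) (Or.inl rfl), sub_zero]

end MeanZero
section Algebra

private lemma sum4_congr {f g : Fin 3 → Fin 3 → Fin 3 → Fin 3 → ℝ}
    (h : ∀ i j k l, f i j k l = g i j k l) :
    ∑ i, ∑ j, ∑ k, ∑ l, f i j k l = ∑ i, ∑ j, ∑ k, ∑ l, g i j k l := by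
  simp only [h]

private lemma sum4_pairswap (f : Fin 3 → Fin 3 → Fin 3 → Fin 3 → ℝ) :
    ∑ i, ∑ j, ∑ k, ∑ l, f i j k l = ∑ i, ∑ j, ∑ k, ∑ l, f k l i j := by
  simp only [Fin.sum_univ_three]; ring

private lemma sum4_swap12 (f : Fin 3 → Fin 3 → Fin 3 → Fin 3 → ℝ) :
    ∑ i, ∑ j, ∑ k, ∑ l, f i j k l = ∑ i, ∑ j, ∑ k, ∑ l, f j i k l := by
  simp only [Fin.sum_univ_three]; ring

private lemma sum4_swap34 (f : Fin 3 → Fin 3 → Fin 3 → Fin 3 → ℝ) :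
    ∑ i, ∑ j, ∑ k, ∑ l, f i j k l = ∑ i, ∑ j, ∑ k, ∑ l, f i j l k := by
  simp only [Fin.sum_univ_three]; ring

/-- pointwise ellipticity for general (non-symmetric) matrices via symmetrization -/
lemma elliptic_pointwise (c : Fin 3 → Fin 3 → Fin 3 → Fin 3 → ℝ)
    (h1 : ∀ i j k l, c i j k l = c j i k l) (h2 : ∀ i j k l, c i j k l = c k l i j)
    (α : ℝ)
    (hcell : ∀ X : Fin 3 → Fin 3 → ℝ, (∀ i j, X i j = X j i) →
      α * (∑ i, ∑ j, X i j ^ 2) ≤ ∑ i, ∑ j, ∑ k, ∑ l, c i j k l * X i j * X k l)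
    (G : Fin 3 → Fin 3 → ℝ) :
    α * (∑ i, ∑ j, ((G i j + G j i) / 2) ^ 2) ≤
      ∑ i, ∑ j, ∑ k, ∑ l, c i j k l * G k l * G i j := by
  have h4 : ∀ i j k l, c i j k l = c i j l k := fun i j k l => by
    rw [h2, h1, ← h2 l k i j]
  set S : Fin 3 → Fin 3 → ℝ := fun i j => (G i j + G j i) / 2 with hS
  have hSsym : ∀ i j, S i j = S j i := fun i j => by simp only [hS]; ring
  refine le_trans (hcell S hSsym) (le_of_eq ?_)
  have e1 : (∑ i, ∑ j, ∑ k, ∑ l, c i j k l * G j i * G k l)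
      = ∑ i, ∑ j, ∑ k, ∑ l, c i j k l * G i j * G k l := by
    rw [sum4_swap12 (fun i j k l => c i j k l * G j i * G k l)]
    exact sum4_congr fun i j k l => by rw [← h1]
  have e2 : (∑ i, ∑ j, ∑ k, ∑ l, c i j k l * G i j * G l k)
      = ∑ i, ∑ j, ∑ k, ∑ l, c i j k l * G i j * G k l := by
    rw [sum4_swap34 (fun i j k l => c i j k l * G i j * G l k)]
    exact sum4_congr fun i j k l => by rw [← h4]
  have e3 : (∑ i, ∑ j, ∑ k, ∑ l, c i j k l * G j i * G l k)
      = ∑ i, ∑ j, ∑ k, ∑ l, c i j k l * G i j * G k l := by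
    rw [sum4_swap12 (fun i j k l => c i j k l * G j i * G l k)]
    have := sum4_swap34 (fun i j k l => c j i k l * G i j * G l k)
    rw [this]
    exact sum4_congr fun i j k l => by rw [← h1, ← h4]
  have split : (∑ i, ∑ j, ∑ k, ∑ l, c i j k l * S i j * S k l)
      = ((∑ i, ∑ j, ∑ k, ∑ l, c i j k l * G i j * G k l)
        + (∑ i, ∑ j, ∑ k, ∑ l, c i j k l * G j i * G k l)
        + (∑ i, ∑ j, ∑ k, ∑ l, c i j k l * G i j * G l k)
        + (∑ i, ∑ j, ∑ k, ∑ l, c i j k l * G j i * G l k)) / 4 := by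
    simp only [hS, Fin.sum_univ_three]; ring
  have swapmul : (∑ i, ∑ j, ∑ k, ∑ l, c i j k l * G k l * G i j)
      = ∑ i, ∑ j, ∑ k, ∑ l, c i j k l * G i j * G k l :=
    sum4_congr fun i j k l => by ring
  rw [split, e1, e2, e3, swapmul]
  ring

end Algebra

section SqLower

lemma sq_lower {s : Set (Fin 3 → ℝ)} (hs : MeasurableSet s) (hfin : volume s < ⊤)
    (b : ℝ) {V : (Fin 3 → ℝ) → ℝ} (hV : L2 s V) (h0 : ∫ x in s, V x = 0) :
    (volume s).toReal * b ^ 2 ≤ ∫ x in s, (b + V x) ^ 2 := by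
  have hi : IntegrableOn V s := hV.integrableOn hfin
  have expand : (fun x => (b + V x) ^ 2)
      = fun x => b ^ 2 + (2 * b * V x + V x ^ 2) := by funext x; ring
  rw [expand]
  have hg1 : IntegrableOn (fun x => 2 * b * V x) s := hi.const_mul (2 * b)
  have hg : IntegrableOn (fun x => 2 * b * V x + V x ^ 2) s := hg1.add hV.2
  rw [MeasureTheory.integral_add ((integrableOn_const_iff (C := b ^ 2)).2 (Or.inr hfin)) hg]
  rw [MeasureTheory.integral_add hg1 hV.2]
  rw [MeasureTheory.setIntegral_const, MeasureTheory.integral_const_mul, h0, mul_zero]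
  have : 0 ≤ ∫ x in s, V x ^ 2 := MeasureTheory.setIntegral_nonneg hs fun x _ => sq_nonneg _
  rw [smul_eq_mul]
  rw [measureReal_def]
  linarith

end SqLower
section MoreL2

lemma L2.sub {s f g} (hf : L2 s f) (hg : L2 s g) : L2 s (fun x => f x - g x) := by
  have h := hf.add (hg.const_mul (-1))
  have : (fun x => f x - g x) = fun x => f x + (-1) * g x := by funext x; ring
  rw [this]; exact h

lemma L2.div_const {s f} (hf : L2 s f) (r : ℝ) : L2 s (fun x => f x / r) := by
  have h := hf.const_mul r⁻¹
  have : (fun x => f x / r) = fun x => r⁻¹ * f x := by funext x; ring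
  rw [this]; exact h

lemma pd_sub {f g : (Fin 3 → ℝ) → ℝ} (hf : Differentiable ℝ f) (hg : Differentiable ℝ g)
    (j : Fin 3) (x : Fin 3 → ℝ) :
    pd (fun y => f y - g y) j x = pd f j x - pd g j x := by
  simp only [pd, fderiv_fun_sub (hf x) (hg x)]
  simp

end MoreL2

section Master

/-- The master energy estimate for the coupled piezoelectric cell problem. -/
lemma master
    {c : Fin 3 → Fin 3 → Fin 3 → Fin 3 → (Fin 3 → ℝ) → ℝ}
    {e : Fin 3 → Fin 3 → Fin 3 → (Fin 3 → ℝ) → ℝ}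
    {ϵ : Fin 3 → Fin 3 → (Fin 3 → ℝ) → ℝ}
    (hc : ∀ i j k l, BddMeas (c i j k l)) (he : ∀ k i j, BddMeas (e k i j))
    (hϵb : ∀ i j, BddMeas (ϵ i j))
    (hcsym : ∀ i j k l x, c i j k l x = c j i k l x ∧ c i j k l x = c k l i j x)
    {α β : ℝ}
    (hcell : ∀ x (X : Fin 3 → Fin 3 → ℝ), (∀ i j, X i j = X j i) →
      α * (∑ i, ∑ j, X i j ^ 2) ≤ ∑ i, ∑ j, ∑ k, ∑ l, c i j k l x * X i j * X k l)
    (hϵell : ∀ x (v : Fin 3 → ℝ), β * (∑ i, v i ^ 2) ≤ ∑ i, ∑ j, ϵ i j x * v i * v j)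
    (hα : 0 < α) (hβ : 0 < β)
    (xα : Fin 3 → ℝ) {δ : ℝ} (hδ : 0 < δ)
    (U : Fin 3 → (Fin 3 → ℝ) → ℝ) (φ : (Fin 3 → ℝ) → ℝ)
    (w : Fin 3 → (Fin 3 → ℝ) → ℝ) (A : Fin 3 → Fin 3 → ℝ)
    (ψ : (Fin 3 → ℝ) → ℝ) (v : Fin 3 → ℝ)
    (hw : ∀ n, H10 (cube xα δ) (w n)) (hψ : H10 (cube xα δ) ψ)
    (hUw : ∀ n h x, pd (U n) h x = pd (w n) h x + A n h)
    (hφψ : ∀ i x, pd φ i x = pd ψ i x + v i)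
    (weak1 : ∀ i', ∀ g, H10 (cube xα δ) g →
      ∫ x in cube xα δ, (∑ j, ((∑ n, ∑ h, c i' j n h x * pd (U n) h x)
        + ∑ h, e h i' j x * pd φ h x) * pd g j x) = 0)
    (weak2 : ∀ g, H10 (cube xα δ) g →
      ∫ x in cube xα δ, (∑ i', ((∑ n, ∑ h, e i' n h x * pd (U n) h x)
        - ∑ h, ϵ i' h x * pd φ h x) * pd g i' x) = 0) :
    (volume (cube xα δ)).toReal *
        (α * (∑ i, ∑ j, ((A i j + A j i) / 2) ^ 2) + β * ∑ i, v i ^ 2)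
      ≤ ∫ x in cube xα δ,
          ((∑ i, ∑ j, ((∑ n, ∑ h, c i j n h x * pd (U n) h x)
              + ∑ h, e h i j x * pd φ h x) * A i j)
            - ∑ i, ((∑ n, ∑ h, e i n h x * pd (U n) h x)
              - ∑ h, ϵ i h x * pd φ h x) * v i) := by
  have hsm : MeasurableSet (cube xα δ) := measurableSet_cube xα δ
  have hfin : volume (cube xα δ) < ⊤ := volume_cube_lt_top xα δ
  set s := cube xα δ with hs
  set m := (volume s).toReal with hm
  -- L2 facts for the gradients
  have hGL2 : ∀ n h, L2 s (pd (U n) h) := by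
    intro n h
    have hh : pd (U n) h = fun x => pd (w n) h x + A n h := funext (hUw n h)
    rw [hh]
    exact ((hw n).l2pd h).add (L2.const s hfin (A n h))
  have hFL2 : ∀ i, L2 s (pd φ i) := by
    intro i
    have hh : pd φ i = fun x => pd ψ i x + v i := funext (hφψ i)
    rw [hh]
    exact (hψ.l2pd i).add (L2.const s hfin (v i))
  -- L2 facts for stress and electric displacement
  have hσL2 : ∀ i j, L2 s (fun x =>
      (∑ n, ∑ h, c i j n h x * pd (U n) h x) + ∑ h, e h i j x * pd φ h x) :=
    fun i j => L2.add
      (L2.sum Finset.univ _ fun n _ => L2.sum Finset.univ _ fun h _ =>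
        L2.bddMul (hc i j n h) (hGL2 n h))
      (L2.sum Finset.univ _ fun h _ => L2.bddMul (he h i j) (hFL2 h))
  have hDL2 : ∀ i, L2 s (fun x =>
      (∑ n, ∑ h, e i n h x * pd (U n) h x) - ∑ h, ϵ i h x * pd φ h x) :=
    fun i => L2.sub
      (L2.sum Finset.univ _ fun n _ => L2.sum Finset.univ _ fun h _ =>
        L2.bddMul (he i n h) (hGL2 n h))
      (L2.sum Finset.univ _ fun h _ => L2.bddMul (hϵb i h) (hFL2 h))
  -- integrability of the various integrands
  have hintCGG : IntegrableOn (fun x =>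
      ∑ i, ∑ j, ∑ n, ∑ h, c i j n h x * pd (U n) h x * pd (U i) j x) s :=
    MeasureTheory.integrable_finset_sum _ fun i _ =>
      MeasureTheory.integrable_finset_sum _ fun j _ =>
        MeasureTheory.integrable_finset_sum _ fun n _ =>
          MeasureTheory.integrable_finset_sum _ fun h _ =>
            (L2.bddMul (hc i j n h) (hGL2 n h)).mul (hGL2 i j)
  have hintEFF : IntegrableOn (fun x =>
      ∑ i, ∑ h, ϵ i h x * pd φ h x * pd φ i x) s :=
    MeasureTheory.integrable_finset_sum _ fun i _ =>
      MeasureTheory.integrable_finset_sum _ fun h _ =>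
        (L2.bddMul (hϵb i h) (hFL2 h)).mul (hFL2 i)
  have hintE : IntegrableOn (fun x =>
      (∑ i, ∑ j, ∑ n, ∑ h, c i j n h x * pd (U n) h x * pd (U i) j x)
        + ∑ i, ∑ h, ϵ i h x * pd φ h x * pd φ i x) s := hintCGG.add hintEFF
  have hintS1 : IntegrableOn (fun x => ∑ i, ∑ j,
      ((∑ n, ∑ h, c i j n h x * pd (U n) h x) + ∑ h, e h i j x * pd φ h x)
        * pd (w i) j x) s :=
    MeasureTheory.integrable_finset_sum _ fun i _ =>
      MeasureTheory.integrable_finset_sum _ fun j _ =>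
        (hσL2 i j).mul ((hw i).l2pd j)
  have hintS2 : IntegrableOn (fun x => ∑ i,
      ((∑ n, ∑ h, e i n h x * pd (U n) h x) - ∑ h, ϵ i h x * pd φ h x)
        * pd ψ i x) s :=
    MeasureTheory.integrable_finset_sum _ fun i _ => (hDL2 i).mul (hψ.l2pd i)
  -- the two weak-form identities
  have E1 : ∫ x in s, (∑ i, ∑ j,
      ((∑ n, ∑ h, c i j n h x * pd (U n) h x) + ∑ h, e h i j x * pd φ h x)
        * pd (w i) j x) = 0 := by
    rw [MeasureTheory.integral_finset_sum _ (fun i _ =>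
      MeasureTheory.integrable_finset_sum _ fun j _ => (hσL2 i j).mul ((hw i).l2pd j))]
    exact Finset.sum_eq_zero fun i _ => weak1 i (w i) (hw i)
  have E2 : ∫ x in s, (∑ i,
      ((∑ n, ∑ h, e i n h x * pd (U n) h x) - ∑ h, ϵ i h x * pd φ h x)
        * pd ψ i x) = 0 := weak2 ψ hψ
  -- pointwise rearrangement of the target integrand
  have hpt : (fun x =>
      (∑ i, ∑ j, ((∑ n, ∑ h, c i j n h x * pd (U n) h x)
          + ∑ h, e h i j x * pd φ h x) * A i j)
        - ∑ i, ((∑ n, ∑ h, e i n h x * pd (U n) h x)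
          - ∑ h, ϵ i h x * pd φ h x) * v i)
      = fun x =>
        ((∑ i, ∑ j, ∑ n, ∑ h, c i j n h x * pd (U n) h x * pd (U i) j x)
            + ∑ i, ∑ h, ϵ i h x * pd φ h x * pd φ i x)
          - (∑ i, ∑ j, ((∑ n, ∑ h, c i j n h x * pd (U n) h x)
              + ∑ h, e h i j x * pd φ h x) * pd (w i) j x)
          + ∑ i, ((∑ n, ∑ h, e i n h x * pd (U n) h x)
              - ∑ h, ϵ i h x * pd φ h x) * pd ψ i x := by
    funext x
    simp only [hUw, hφψ, Fin.sum_univ_three]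
    ring
  -- hence the target integral equals the energy integral
  have main_eq : (∫ x in s,
      ((∑ i, ∑ j, ((∑ n, ∑ h, c i j n h x * pd (U n) h x)
          + ∑ h, e h i j x * pd φ h x) * A i j)
        - ∑ i, ((∑ n, ∑ h, e i n h x * pd (U n) h x)
          - ∑ h, ϵ i h x * pd φ h x) * v i))
      = ∫ x in s,
        ((∑ i, ∑ j, ∑ n, ∑ h, c i j n h x * pd (U n) h x * pd (U i) j x)
          + ∑ i, ∑ h, ϵ i h x * pd φ h x * pd φ i x) := by
    rw [hpt]
    have h1 : IntegrableOn (fun x =>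
        ((∑ i, ∑ j, ∑ n, ∑ h, c i j n h x * pd (U n) h x * pd (U i) j x)
            + ∑ i, ∑ h, ϵ i h x * pd φ h x * pd φ i x)
          - (∑ i, ∑ j, ((∑ n, ∑ h, c i j n h x * pd (U n) h x)
              + ∑ h, e h i j x * pd φ h x) * pd (w i) j x)) s := hintE.sub hintS1
    have step1 : (∫ x in s, (((∑ i, ∑ j, ∑ n, ∑ h, c i j n h x * pd (U n) h x * pd (U i) j x)
            + ∑ i, ∑ h, ϵ i h x * pd φ h x * pd φ i x)
          - (∑ i, ∑ j, ((∑ n, ∑ h, c i j n h x * pd (U n) h x)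
              + ∑ h, e h i j x * pd φ h x) * pd (w i) j x)
          + ∑ i, ((∑ n, ∑ h, e i n h x * pd (U n) h x)
              - ∑ h, ϵ i h x * pd φ h x) * pd ψ i x))
        = (∫ x in s, (((∑ i, ∑ j, ∑ n, ∑ h, c i j n h x * pd (U n) h x * pd (U i) j x)
            + ∑ i, ∑ h, ϵ i h x * pd φ h x * pd φ i x)
          - (∑ i, ∑ j, ((∑ n, ∑ h, c i j n h x * pd (U n) h x)
              + ∑ h, e h i j x * pd φ h x) * pd (w i) j x)))
          + ∫ x in s, (∑ i, ((∑ n, ∑ h, e i n h x * pd (U n) h x)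
              - ∑ h, ϵ i h x * pd φ h x) * pd ψ i x) :=
      MeasureTheory.integral_add h1 hintS2
    have step2 : (∫ x in s, (((∑ i, ∑ j, ∑ n, ∑ h, c i j n h x * pd (U n) h x * pd (U i) j x)
            + ∑ i, ∑ h, ϵ i h x * pd φ h x * pd φ i x)
          - (∑ i, ∑ j, ((∑ n, ∑ h, c i j n h x * pd (U n) h x)
              + ∑ h, e h i j x * pd φ h x) * pd (w i) j x)))
        = (∫ x in s, ((∑ i, ∑ j, ∑ n, ∑ h, c i j n h x * pd (U n) h x * pd (U i) j x)
            + ∑ i, ∑ h, ϵ i h x * pd φ h x * pd φ i x))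
          - ∫ x in s, (∑ i, ∑ j, ((∑ n, ∑ h, c i j n h x * pd (U n) h x)
              + ∑ h, e h i j x * pd φ h x) * pd (w i) j x) :=
      MeasureTheory.integral_sub hintE hintS1
    rw [step1, step2, E1, E2]
    ring
  rw [main_eq]
  -- lower bound the energy integral
  -- pointwise coercivity
  have htsym1 : ∀ i j k l x, c i j k l x = c j i k l x := fun i j k l x => (hcsym i j k l x).1
  have htsym2 : ∀ i j k l x, c i j k l x = c k l i j x := fun i j k l x => (hcsym i j k l x).2
  have pointwise : ∀ x,
      α * (∑ i, ∑ j, ((pd (U i) j x + pd (U j) i x) / 2) ^ 2)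
        + β * (∑ i, (pd φ i x) ^ 2)
      ≤ (∑ i, ∑ j, ∑ n, ∑ h, c i j n h x * pd (U n) h x * pd (U i) j x)
          + ∑ i, ∑ h, ϵ i h x * pd φ h x * pd φ i x := by
    intro x
    have hcg := elliptic_pointwise (fun i j k l => c i j k l x)
      (fun i j k l => htsym1 i j k l x) (fun i j k l => htsym2 i j k l x) α
      (hcell x) (fun n h => pd (U n) h x)
    have hϵg := hϵell x (fun i => pd φ i x)
    have hswap : (∑ i, ∑ j, ϵ i j x * pd φ i x * pd φ j x)
        = ∑ i, ∑ h, ϵ i h x * pd φ h x * pd φ i x :=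
      Finset.sum_congr rfl fun i _ => Finset.sum_congr rfl fun j _ => by ring
    rw [hswap] at hϵg
    exact add_le_add hcg hϵg
  -- integrability of the lower bound
  have hSymL2 : ∀ i j, L2 s (fun x => (pd (U i) j x + pd (U j) i x) / 2) :=
    fun i j => ((hGL2 i j).add (hGL2 j i)).div_const 2
  have hintlow : IntegrableOn (fun x =>
      α * (∑ i, ∑ j, ((pd (U i) j x + pd (U j) i x) / 2) ^ 2)
        + β * (∑ i, (pd φ i x) ^ 2)) s := by
    refine Integrable.add ?_ ?_
    · exact (MeasureTheory.integrable_finset_sum _ fun i _ =>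
        MeasureTheory.integrable_finset_sum _ fun j _ => (hSymL2 i j).2).const_mul α
    · exact (MeasureTheory.integrable_finset_sum _ fun i _ => (hFL2 i).2).const_mul β
  have mono : (∫ x in s,
      (α * (∑ i, ∑ j, ((pd (U i) j x + pd (U j) i x) / 2) ^ 2)
        + β * (∑ i, (pd φ i x) ^ 2)))
      ≤ ∫ x in s,
        ((∑ i, ∑ j, ∑ n, ∑ h, c i j n h x * pd (U n) h x * pd (U i) j x)
          + ∑ i, ∑ h, ϵ i h x * pd φ h x * pd φ i x) :=
    MeasureTheory.setIntegral_mono_on hintlow hintE hsm fun x _ => pointwise x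
  refine le_trans ?_ mono
  -- split the lower-bound integral
  have hsplit : (∫ x in s,
      (α * (∑ i, ∑ j, ((pd (U i) j x + pd (U j) i x) / 2) ^ 2)
        + β * (∑ i, (pd φ i x) ^ 2)))
      = α * (∫ x in s, ∑ i, ∑ j, ((pd (U i) j x + pd (U j) i x) / 2) ^ 2)
        + β * (∫ x in s, ∑ i, (pd φ i x) ^ 2) := by
    rw [MeasureTheory.integral_add ((MeasureTheory.integrable_finset_sum _ fun i _ =>
        MeasureTheory.integrable_finset_sum _ fun j _ => (hSymL2 i j).2).const_mul α)
      ((MeasureTheory.integrable_finset_sum _ fun i _ => (hFL2 i).2).const_mul β),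
      MeasureTheory.integral_const_mul, MeasureTheory.integral_const_mul]
  rw [hsplit]
  -- bound each piece from below using the mean-zero property
  have sym_bound : ∀ i j, m * ((A i j + A j i) / 2) ^ 2
      ≤ ∫ x in s, ((pd (U i) j x + pd (U j) i x) / 2) ^ 2 := by
    intro i j
    have hVL2 : L2 s (fun x => (pd (w i) j x + pd (w j) i x) / 2) :=
      (((hw i).l2pd j).add ((hw j).l2pd i)).div_const 2
    have h0 : ∫ x in s, ((pd (w i) j x + pd (w j) i x) / 2) = 0 := by
      have hadd : ∫ x in s, (pd (w i) j x + pd (w j) i x)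
          = (∫ x in s, pd (w i) j x) + ∫ x in s, pd (w j) i x :=
        MeasureTheory.integral_add (((hw i).l2pd j).integrableOn hfin)
          (((hw j).l2pd i).integrableOn hfin)
      rw [MeasureTheory.integral_div, hadd,
        integral_pd_eq_zero xα hδ (hw i) j, integral_pd_eq_zero xα hδ (hw j) i]
      norm_num
    have hb := sq_lower hsm hfin ((A i j + A j i) / 2) hVL2 h0
    have hee : (fun x => ((A i j + A j i) / 2 + (pd (w i) j x + pd (w j) i x) / 2) ^ 2)
        = fun x => ((pd (U i) j x + pd (U j) i x) / 2) ^ 2 := by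
      funext x
      rw [hUw i j x, hUw j i x]
      ring
    rw [hee] at hb
    exact hb
  have pot_bound : ∀ i, m * (v i) ^ 2 ≤ ∫ x in s, (pd φ i x) ^ 2 := by
    intro i
    have h0 : ∫ x in s, pd ψ i x = 0 := integral_pd_eq_zero xα hδ hψ i
    have hb := sq_lower hsm hfin (v i) (hψ.l2pd i) h0
    have hee : (fun x => (v i + pd ψ i x) ^ 2) = fun x => (pd φ i x) ^ 2 := by
      funext x
      rw [hφψ i x]
      ring
    rw [hee] at hb
    exact hb
  -- sum up
  have sum1 : m * (∑ i, ∑ j, ((A i j + A j i) / 2) ^ 2)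
      ≤ ∫ x in s, ∑ i, ∑ j, ((pd (U i) j x + pd (U j) i x) / 2) ^ 2 := by
    rw [MeasureTheory.integral_finset_sum _ (fun i _ =>
      MeasureTheory.integrable_finset_sum _ fun j _ => (hSymL2 i j).2)]
    have : ∀ i : Fin 3, (∫ x in s, ∑ j, ((pd (U i) j x + pd (U j) i x) / 2) ^ 2)
        = ∑ j, ∫ x in s, ((pd (U i) j x + pd (U j) i x) / 2) ^ 2 := fun i =>
      MeasureTheory.integral_finset_sum _ fun j _ => (hSymL2 i j).2
    simp only [this]
    rw [Finset.mul_sum]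
    refine Finset.sum_le_sum fun i _ => ?_
    rw [Finset.mul_sum]
    exact Finset.sum_le_sum fun j _ => sym_bound i j
  have sum2 : m * (∑ i, (v i) ^ 2) ≤ ∫ x in s, ∑ i, (pd φ i x) ^ 2 := by
    rw [MeasureTheory.integral_finset_sum _ (fun i _ => (hFL2 i).2), Finset.mul_sum]
    exact Finset.sum_le_sum fun i _ => pot_bound i
  have h1 := mul_le_mul_of_nonneg_left sum1 hα.le
  have h2 := mul_le_mul_of_nonneg_left sum2 hβ.le
  nlinarith [h1, h2]

end Master
section LinHelpers

lemma pd_lin2 (F : Fin 3 → Fin 3 → (Fin 3 → ℝ) → ℝ) (X : Fin 3 → Fin 3 → ℝ)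
    (hF : ∀ k l, Differentiable ℝ (F k l)) (j : Fin 3) (x : Fin 3 → ℝ) :
    pd (fun y => ∑ k, ∑ l, X k l * F k l y) j x = ∑ k, ∑ l, X k l * pd (F k l) j x := by
  rw [pd_sum Finset.univ _ (fun k _ => Differentiable.fun_sum fun l _ =>
    (hF k l).const_mul (X k l)) j x]
  refine Finset.sum_congr rfl fun k _ => ?_
  rw [pd_sum Finset.univ _ (fun l _ => (hF k l).const_mul (X k l)) j x]
  exact Finset.sum_congr rfl fun l _ => pd_const_mul (hF k l) (X k l) j x

lemma pd_lin1 (F : Fin 3 → (Fin 3 → ℝ) → ℝ) (v : Fin 3 → ℝ)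
    (hF : ∀ l, Differentiable ℝ (F l)) (j : Fin 3) (x : Fin 3 → ℝ) :
    pd (fun y => ∑ l, v l * F l y) j x = ∑ l, v l * pd (F l) j x := by
  rw [pd_sum Finset.univ _ (fun l _ => (hF l).const_mul (v l)) j x]
  exact Finset.sum_congr rfl fun l _ => pd_const_mul (hF l) (v l) j x

lemma differentiable_lin (r : Fin 3 → ℝ) :
    Differentiable ℝ (fun y : Fin 3 → ℝ => ∑ l, r l * y l) :=
  Differentiable.fun_sum fun l _ => (differentiable_coord l).const_mul (r l)

lemma pd_lin_coord (r : Fin 3 → ℝ) (h : Fin 3) (x : Fin 3 → ℝ) :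
    pd (fun y : Fin 3 → ℝ => ∑ l, r l * y l) h x = r h := by
  have := pd_lin1 (fun l => fun y : Fin 3 → ℝ => y l) r
    (fun l => differentiable_coord l) h x
  rw [this]
  simp [pd_coord, mul_ite, mul_one, mul_zero, Finset.sum_ite_eq', Finset.mem_univ]

lemma differentiable_ite_coord (n k l : Fin 3) :
    Differentiable ℝ (fun y : Fin 3 → ℝ => if n = k then y l else 0) := by
  by_cases hnk : n = k
  · simp only [if_pos hnk]; exact differentiable_coord l
  · simp only [if_neg hnk]; exact differentiable_const 0

lemma pd_ite_coord (n k l h : Fin 3) (x : Fin 3 → ℝ) :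
    pd (fun y : Fin 3 → ℝ => if n = k then y l else 0) h x
      = if n = k then (if l = h then 1 else 0) else 0 := by
  by_cases hnk : n = k
  · simp only [if_pos hnk]; exact pd_coord l h x
  · simp only [if_neg hnk]; simp [pd]

end LinHelpers
section CombLemmas

set_option maxHeartbeats 1000000

lemma comb1 (a : Fin 3 → Fin 3 → Fin 3 → ℝ) (b : Fin 3 → Fin 3 → ℝ)
    (X : Fin 3 → Fin 3 → ℝ) (p : Fin 3 → Fin 3 → Fin 3 → Fin 3 → ℝ)
    (q : Fin 3 → Fin 3 → Fin 3 → ℝ) (G : Fin 3 → ℝ) :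
    ∑ j, ((∑ n, ∑ h, a j n h * (∑ k, ∑ l, X k l * p k l n h))
        + ∑ h, b j h * (∑ k, ∑ l, X k l * q k l h)) * G j
      = ∑ k, ∑ l, X k l * (∑ j, ((∑ n, ∑ h, a j n h * p k l n h)
        + ∑ h, b j h * q k l h) * G j) := by
  simp only [Fin.sum_univ_three]
  ring

lemma comb2 (a : Fin 3 → Fin 3 → Fin 3 → ℝ) (b : Fin 3 → Fin 3 → ℝ)
    (X : Fin 3 → Fin 3 → ℝ) (p : Fin 3 → Fin 3 → Fin 3 → Fin 3 → ℝ)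
    (q : Fin 3 → Fin 3 → Fin 3 → ℝ) (G : Fin 3 → ℝ) :
    ∑ j, ((∑ n, ∑ h, a j n h * (∑ k, ∑ l, X k l * p k l n h))
        - ∑ h, b j h * (∑ k, ∑ l, X k l * q k l h)) * G j
      = ∑ k, ∑ l, X k l * (∑ j, ((∑ n, ∑ h, a j n h * p k l n h)
        - ∑ h, b j h * q k l h) * G j) := by
  simp only [Fin.sum_univ_three]
  ring

end CombLemmas
section CombLemmas2
set_option maxHeartbeats 2000000 in
lemma comb5 (a : Fin 3 → Fin 3 → Fin 3 → Fin 3 → ℝ) (b : Fin 3 → Fin 3 → Fin 3 → ℝ)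
    (X : Fin 3 → Fin 3 → ℝ) (p : Fin 3 → Fin 3 → Fin 3 → Fin 3 → ℝ)
    (q : Fin 3 → Fin 3 → Fin 3 → ℝ) :
    ∑ i, ∑ j, ((∑ n, ∑ h, a i j n h * (∑ k, ∑ l, X k l * p k l n h))
        + ∑ h, b i j h * (∑ k, ∑ l, X k l * q k l h)) * X i j
      = ∑ i, ∑ j, ∑ k, ∑ l, (((∑ n, ∑ h, a i j n h * p k l n h)
        + ∑ h, b i j h * q k l h) * X i j * X k l) := by
  simp only [Fin.sum_univ_three]
  ring
end CombLemmas2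
section CombLemmas3
lemma comb1s (a : Fin 3 → Fin 3 → Fin 3 → ℝ) (b : Fin 3 → Fin 3 → ℝ)
    (v : Fin 3 → ℝ) (p : Fin 3 → Fin 3 → Fin 3 → ℝ) (q : Fin 3 → Fin 3 → ℝ)
    (G : Fin 3 → ℝ) :
    ∑ j, ((∑ n, ∑ h, a j n h * (∑ l, v l * p l n h))
        + ∑ h, b j h * (∑ l, v l * q l h)) * G j
      = ∑ l, v l * (∑ j, ((∑ n, ∑ h, a j n h * p l n h)
        + ∑ h, b j h * q l h) * G j) := by
  simp only [Fin.sum_univ_three]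
  ring

lemma comb2s (a : Fin 3 → Fin 3 → Fin 3 → ℝ) (b : Fin 3 → Fin 3 → ℝ)
    (v : Fin 3 → ℝ) (p : Fin 3 → Fin 3 → Fin 3 → ℝ) (q : Fin 3 → Fin 3 → ℝ)
    (G : Fin 3 → ℝ) :
    ∑ j, ((∑ n, ∑ h, a j n h * (∑ l, v l * p l n h))
        - ∑ h, b j h * (∑ l, v l * q l h)) * G j
      = ∑ l, v l * (∑ j, ((∑ n, ∑ h, a j n h * p l n h)
        - ∑ h, b j h * q l h) * G j) := by
  simp only [Fin.sum_univ_three]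
  ring

lemma comb7 (a : Fin 3 → Fin 3 → Fin 3 → ℝ) (b : Fin 3 → Fin 3 → ℝ)
    (v : Fin 3 → ℝ) (p : Fin 3 → Fin 3 → Fin 3 → ℝ) (q : Fin 3 → Fin 3 → ℝ) :
    ∑ i, ∑ l, (((∑ n, ∑ h, a i n h * p l n h) - ∑ h, b i h * q l h) * v i * v l)
      = ∑ i, ((∑ n, ∑ h, a i n h * (∑ l, v l * p l n h))
          - ∑ h, b i h * (∑ l, v l * q l h)) * v i := by
  simp only [Fin.sum_univ_three]
  ring
end CombLemmas3
set_option maxHeartbeats 2000000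

/-- the HMM effective elastic tensor is uniformly elliptic on
symmetric matrices and the HMM effective dielectric tensor is positive
definite. -/
theorem hmm_effective_coefficients_elliptic
    (c : Fin 3 → Fin 3 → Fin 3 → Fin 3 → (Fin 3 → ℝ) → ℝ)
    (e : Fin 3 → Fin 3 → Fin 3 → (Fin 3 → ℝ) → ℝ)
    (ϵ : Fin 3 → Fin 3 → (Fin 3 → ℝ) → ℝ)
    (hc : ∀ i j k l, BddMeas (c i j k l)) (he : ∀ k i j, BddMeas (e k i j))
    (hϵ : ∀ i j, BddMeas (ϵ i j))
    (hcsym : ∀ i j k l x, c i j k l x = c j i k l x ∧ c i j k l x = c k l i j x)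
    (hesym : ∀ k i j x, e k i j x = e k j i x)
    (hϵsym : ∀ i j x, ϵ i j x = ϵ j i x)
    (hcell : ∃ α > (0:ℝ), ∀ x (X : Fin 3 → Fin 3 → ℝ), (∀ i j, X i j = X j i) →
      α * (∑ i, ∑ j, X i j ^ 2) ≤ ∑ i, ∑ j, ∑ k, ∑ l, c i j k l x * X i j * X k l)
    (hϵell : ∃ β > (0:ℝ), ∀ x (v : Fin 3 → ℝ),
      β * (∑ i, v i ^ 2) ≤ ∑ i, ∑ j, ϵ i j x * v i * v j)
    (xα : Fin 3 → ℝ) (δ : ℝ) (hδ : 0 < δ)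
    -- the first family of cell problems `(P^{kl}, Φ_{kl})`
    (P : Fin 3 → Fin 3 → Fin 3 → (Fin 3 → ℝ) → ℝ) (Φ : Fin 3 → Fin 3 → (Fin 3 → ℝ) → ℝ)
    (hPreg : ∀ k l n, Differentiable ℝ (P k l n))
    (hPbc : ∀ k l n, H10 (cube xα δ) (fun x => P k l n x - if n = k then x l else 0))
    (hΦbc : ∀ k l, H10 (cube xα δ) (Φ k l))
    (hP1 : ∀ k l i', ∀ g, H10 (cube xα δ) g →
      ∫ x in cube xα δ, (∑ j, ((∑ n, ∑ h, c i' j n h x * pd (P k l n) h x)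
        + ∑ h, e h i' j x * pd (Φ k l) h x) * pd g j x) = 0)
    (hP2 : ∀ k l, ∀ g, H10 (cube xα δ) g →
      ∫ x in cube xα δ, (∑ i', ((∑ n, ∑ h, e i' n h x * pd (P k l n) h x)
        - ∑ h, ϵ i' h x * pd (Φ k l) h x) * pd g i' x) = 0)
    -- the second family of cell problems `(Q^{l}, Ψ_l)`
    (Q : Fin 3 → Fin 3 → (Fin 3 → ℝ) → ℝ) (Ψ : Fin 3 → (Fin 3 → ℝ) → ℝ)
    (hΨreg : ∀ l, Differentiable ℝ (Ψ l))
    (hQbc : ∀ l n, H10 (cube xα δ) (Q l n))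
    (hΨbc : ∀ l, H10 (cube xα δ) (fun x => Ψ l x - x l))
    (hQ1 : ∀ l i', ∀ g, H10 (cube xα δ) g →
      ∫ x in cube xα δ, (∑ j, ((∑ n, ∑ h, c i' j n h x * pd (Q l n) h x)
        + ∑ h, e h i' j x * pd (Ψ l) h x) * pd g j x) = 0)
    (hQ2 : ∀ l, ∀ g, H10 (cube xα δ) g →
      ∫ x in cube xα δ, (∑ i', ((∑ n, ∑ h, e i' n h x * pd (Q l n) h x)
        - ∑ h, ϵ i' h x * pd (Ψ l) h x) * pd g i' x) = 0) :
    (∃ αH > (0:ℝ), ∀ X : Fin 3 → Fin 3 → ℝ, (∀ i j, X i j = X j i) →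
        αH * (∑ i, ∑ j, X i j ^ 2) ≤
          ∑ i, ∑ j, ∑ k, ∑ l, cH c e (cube xα δ) P Φ i j k l * X i j * X k l) ∧
    (∃ βH > (0:ℝ), ∀ v : Fin 3 → ℝ,
        βH * (∑ i, v i ^ 2) ≤ ∑ i, ∑ l, epsH e ϵ (cube xα δ) Q Ψ i l * v i * v l) := by
  obtain ⟨α, hα, hcell⟩ := hcell
  obtain ⟨β, hβ, hϵell⟩ := hϵell
  have hsm : MeasurableSet (cube xα δ) := measurableSet_cube xα δ
  have hfin : volume (cube xα δ) < ⊤ := volume_cube_lt_top xα δ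
  have hmpos : 0 < (volume (cube xα δ)).toReal := mcube_pos xα hδ
  have hmne : (volume (cube xα δ)).toReal ≠ 0 := ne_of_gt hmpos
  -- decomposition of the gradients of P
  have hpdP : ∀ k l n h x, pd (P k l n) h x
      = pd (fun y => P k l n y - if n = k then y l else 0) h x
        + (if n = k then (if l = h then 1 else 0) else 0) := by
    intro k l n h x
    rw [← pd_ite_coord n k l h x,
      ← pd_add (hPbc k l n).1 (differentiable_ite_coord n k l)]
    congr 1
    funext y
    ring
  have hPL2 : ∀ k l n h, L2 (cube xα δ) (pd (P k l n) h) := by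
    intro k l n h
    have hh : pd (P k l n) h = fun x =>
        pd (fun y => P k l n y - if n = k then y l else 0) h x
          + (if n = k then (if l = h then 1 else 0) else 0) := funext (hpdP k l n h)
    rw [hh]
    exact ((hPbc k l n).l2pd h).add (L2.const _ hfin _)
  have hΦL2 : ∀ k l h, L2 (cube xα δ) (pd (Φ k l) h) := fun k l h => (hΦbc k l).l2pd h
  have hσP : ∀ k l i j, L2 (cube xα δ) (fun x =>
      (∑ n, ∑ h, c i j n h x * pd (P k l n) h x) + ∑ h, e h i j x * pd (Φ k l) h x) :=
    fun k l i j => L2.add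
      (L2.sum Finset.univ _ fun n _ => L2.sum Finset.univ _ fun h _ =>
        L2.bddMul (hc i j n h) (hPL2 k l n h))
      (L2.sum Finset.univ _ fun h _ => L2.bddMul (he h i j) (hΦL2 k l h))
  constructor
  · -- elastic part
    refine ⟨α, hα, fun X hX => ?_⟩
    have hUdiff : ∀ n, Differentiable ℝ
        (fun x : Fin 3 → ℝ => ∑ k, ∑ l, X k l * P k l n x) :=
      fun n => Differentiable.fun_sum fun k _ => Differentiable.fun_sum fun l _ =>
        (hPreg k l n).const_mul (X k l)
    have hwH : ∀ n, H10 (cube xα δ)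
        (fun x => ∑ k, ∑ l, X k l * (P k l n x - if n = k then x l else 0)) :=
      fun n => H10.sum Finset.univ _ fun k _ => H10.sum Finset.univ _ fun l _ =>
        (hPbc k l n).const_mul (X k l)
    have hψH : H10 (cube xα δ) (fun x => ∑ k, ∑ l, X k l * Φ k l x) :=
      H10.sum Finset.univ _ fun k _ => H10.sum Finset.univ _ fun l _ =>
        (hΦbc k l).const_mul (X k l)
    have hpdU : ∀ n h x, pd (fun y => ∑ k, ∑ l, X k l * P k l n y) h x
        = ∑ k, ∑ l, X k l * pd (P k l n) h x :=
      fun n h x => pd_lin2 (fun k l => P k l n) X (fun k l => hPreg k l n) h x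
    have hpdφ : ∀ h x, pd (fun y => ∑ k, ∑ l, X k l * Φ k l y) h x
        = ∑ k, ∑ l, X k l * pd (Φ k l) h x :=
      fun h x => pd_lin2 (fun k l => Φ k l) X (fun k l => (hΦbc k l).1) h x
    have hpdw : ∀ n h x,
        pd (fun y => ∑ k, ∑ l, X k l * (P k l n y - if n = k then y l else 0)) h x
        = ∑ k, ∑ l, X k l * pd (fun y => P k l n y - if n = k then y l else 0) h x :=
      fun n h x => pd_lin2 (fun k l => fun y => P k l n y - if n = k then y l else 0)
        X (fun k l => (hPbc k l n).1) h x
    have hitesum : ∀ n h, (∑ k, ∑ l, X k l *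
        (if n = k then (if l = h then (1:ℝ) else 0) else 0)) = X n h := by
      intro n h
      simp [mul_ite, mul_one, mul_zero, Finset.sum_ite_eq, Finset.sum_ite_eq']
    have hUw : ∀ n h x, pd (fun y => ∑ k, ∑ l, X k l * P k l n y) h x
        = pd (fun y => ∑ k, ∑ l, X k l * (P k l n y - if n = k then y l else 0)) h x
          + X n h := by
      intro n h x
      rw [hpdU n h x, hpdw n h x]
      have e1 : ∀ k l, X k l * pd (P k l n) h x
          = X k l * pd (fun y => P k l n y - if n = k then y l else 0) h x
            + X k l * (if n = k then (if l = h then (1:ℝ) else 0) else 0) := by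
        intro k l; rw [hpdP k l n h x]; ring
      calc ∑ k, ∑ l, X k l * pd (P k l n) h x
          = ∑ k, ∑ l, (X k l * pd (fun y => P k l n y - if n = k then y l else 0) h x
            + X k l * (if n = k then (if l = h then (1:ℝ) else 0) else 0)) := by
            exact Finset.sum_congr rfl fun k _ => Finset.sum_congr rfl fun l _ => e1 k l
        _ = (∑ k, ∑ l, X k l * pd (fun y => P k l n y - if n = k then y l else 0) h x)
            + ∑ k, ∑ l, X k l * (if n = k then (if l = h then (1:ℝ) else 0) else 0) := by
            simp [Finset.sum_add_distrib]
        _ = _ := by rw [hitesum n h]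
    have hφψ : ∀ i x, pd (fun y => ∑ k, ∑ l, X k l * Φ k l y) i x
        = pd (fun y => ∑ k, ∑ l, X k l * Φ k l y) i x + (fun _ : Fin 3 => (0:ℝ)) i :=
      fun i x => by simp
    -- the weak forms for the combined fields
    have hint1 : ∀ i' k l (g : (Fin 3 → ℝ) → ℝ), H10 (cube xα δ) g →
        IntegrableOn (fun x => ∑ j, ((∑ n, ∑ h, c i' j n h x * pd (P k l n) h x)
          + ∑ h, e h i' j x * pd (Φ k l) h x) * pd g j x) (cube xα δ) :=
      fun i' k l g hg => MeasureTheory.integrable_finset_sum _ fun j _ =>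
        (hσP k l i' j).mul (hg.l2pd j)
    have weak1 : ∀ i' g, H10 (cube xα δ) g →
        ∫ x in cube xα δ, (∑ j, ((∑ n, ∑ h, c i' j n h x *
            pd (fun y => ∑ k, ∑ l, X k l * P k l n y) h x)
          + ∑ h, e h i' j x * pd (fun y => ∑ k, ∑ l, X k l * Φ k l y) h x)
            * pd g j x) = 0 := by
      intro i' g hg
      have hptw : (fun x => ∑ j, ((∑ n, ∑ h, c i' j n h x *
            pd (fun y => ∑ k, ∑ l, X k l * P k l n y) h x)
          + ∑ h, e h i' j x * pd (fun y => ∑ k, ∑ l, X k l * Φ k l y) h x)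
            * pd g j x)
          = fun x => ∑ k, ∑ l, X k l * (∑ j, ((∑ n, ∑ h, c i' j n h x * pd (P k l n) h x)
          + ∑ h, e h i' j x * pd (Φ k l) h x) * pd g j x) := by
        funext x
        simp only [hpdU, hpdφ]
        exact comb1 (fun j n h => c i' j n h x) (fun j h => e h i' j x) X
          (fun k l n h => pd (P k l n) h x) (fun k l h => pd (Φ k l) h x)
          (fun j => pd g j x)
      rw [hptw]
      rw [MeasureTheory.integral_finset_sum _ (fun k _ =>
        MeasureTheory.integrable_finset_sum _ fun l _ =>
          (hint1 i' k l g hg).const_mul (X k l))]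
      refine Finset.sum_eq_zero fun k _ => ?_
      rw [MeasureTheory.integral_finset_sum _ (fun l _ =>
        (hint1 i' k l g hg).const_mul (X k l))]
      refine Finset.sum_eq_zero fun l _ => ?_
      rw [MeasureTheory.integral_const_mul, hP1 k l i' g hg, mul_zero]
    have hint2 : ∀ k l (g : (Fin 3 → ℝ) → ℝ), H10 (cube xα δ) g →
        IntegrableOn (fun x => ∑ i', ((∑ n, ∑ h, e i' n h x * pd (P k l n) h x)
          - ∑ h, ϵ i' h x * pd (Φ k l) h x) * pd g i' x) (cube xα δ) :=
      fun k l g hg => MeasureTheory.integrable_finset_sum _ fun i' _ =>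
        (L2.sub (L2.sum Finset.univ _ fun n _ => L2.sum Finset.univ _ fun h _ =>
            L2.bddMul (he i' n h) (hPL2 k l n h))
          (L2.sum Finset.univ _ fun h _ => L2.bddMul (hϵ i' h) (hΦL2 k l h))).mul
          (hg.l2pd i')
    have weak2 : ∀ g, H10 (cube xα δ) g →
        ∫ x in cube xα δ, (∑ i', ((∑ n, ∑ h, e i' n h x *
            pd (fun y => ∑ k, ∑ l, X k l * P k l n y) h x)
          - ∑ h, ϵ i' h x * pd (fun y => ∑ k, ∑ l, X k l * Φ k l y) h x)
            * pd g i' x) = 0 := by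
      intro g hg
      have hptw : (fun x => ∑ i', ((∑ n, ∑ h, e i' n h x *
            pd (fun y => ∑ k, ∑ l, X k l * P k l n y) h x)
          - ∑ h, ϵ i' h x * pd (fun y => ∑ k, ∑ l, X k l * Φ k l y) h x)
            * pd g i' x)
          = fun x => ∑ k, ∑ l, X k l * (∑ i', ((∑ n, ∑ h, e i' n h x * pd (P k l n) h x)
          - ∑ h, ϵ i' h x * pd (Φ k l) h x) * pd g i' x) := by
        funext x
        simp only [hpdU, hpdφ]
        exact comb2 (fun i' n h => e i' n h x) (fun i' h => ϵ i' h x) X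
          (fun k l n h => pd (P k l n) h x) (fun k l h => pd (Φ k l) h x)
          (fun i' => pd g i' x)
      rw [hptw]
      rw [MeasureTheory.integral_finset_sum _ (fun k _ =>
        MeasureTheory.integrable_finset_sum _ fun l _ =>
          (hint2 k l g hg).const_mul (X k l))]
      refine Finset.sum_eq_zero fun k _ => ?_
      rw [MeasureTheory.integral_finset_sum _ (fun l _ =>
        (hint2 k l g hg).const_mul (X k l))]
      refine Finset.sum_eq_zero fun l _ => ?_
      rw [MeasureTheory.integral_const_mul, hP2 k l g hg, mul_zero]
    -- apply the master estimate
    have key := master hc he hϵ hcsym hcell hϵell hα hβ xα hδ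
      (fun n => fun x => ∑ k, ∑ l, X k l * P k l n x)
      (fun x => ∑ k, ∑ l, X k l * Φ k l x)
      (fun n => fun x => ∑ k, ∑ l, X k l * (P k l n x - if n = k then x l else 0))
      X
      (fun x => ∑ k, ∑ l, X k l * Φ k l x)
      (fun _ => (0:ℝ))
      hwH hψH hUw hφψ weak1 weak2
    -- simplify the statement of `key`
    have hz : ((0:ℝ)) ^ 2 = 0 := by norm_num
    simp only [mul_zero, hz, Finset.sum_const_zero, sub_zero, add_zero] at key
    have hXsq : (∑ i, ∑ j, ((X i j + X j i) / 2) ^ 2) = ∑ i, ∑ j, X i j ^ 2 :=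
      Finset.sum_congr rfl fun i _ => Finset.sum_congr rfl fun j _ => by
        rw [← hX i j]; ring
    rw [hXsq] at key
    -- rewrite the integrand of `key`
    have hRX : (∫ x in cube xα δ, (∑ i, ∑ j, ((∑ n, ∑ h, c i j n h x *
          pd (fun y => ∑ k, ∑ l, X k l * P k l n y) h x)
        + ∑ h, e h i j x * pd (fun y => ∑ k, ∑ l, X k l * Φ k l y) h x) * X i j))
        = ∫ x in cube xα δ, (∑ i, ∑ j, ∑ k, ∑ l,
          (((∑ n, ∑ h, c i j n h x * pd (P k l n) h x)
            + ∑ h, e h i j x * pd (Φ k l) h x) * X i j * X k l)) := by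
      congr 1
      funext x
      simp only [hpdU, hpdφ]
      exact comb5 (fun i j n h => c i j n h x) (fun i j h => e h i j x) X
        (fun k l n h => pd (P k l n) h x) (fun k l h => pd (Φ k l) h x)
    rw [hRX] at key
    -- express the effective tensor sum as an integral
    have hintf : ∀ i j k l : Fin 3, IntegrableOn (fun x =>
        ((∑ n, ∑ h, c i j n h x * pd (P k l n) h x)
          + ∑ h, e h i j x * pd (Φ k l) h x) * X i j * X k l) (cube xα δ) :=
      fun i j k l => (((hσP k l i j).integrableOn hfin).mul_const (X i j)).mul_const (X k l)
    have hterm : ∀ i j k l : Fin 3, cH c e (cube xα δ) P Φ i j k l * X i j * X k l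
        = (volume (cube xα δ)).toReal⁻¹ * ∫ x in cube xα δ,
            (((∑ n, ∑ h, c i j n h x * pd (P k l n) h x)
              + ∑ h, e h i j x * pd (Φ k l) h x) * X i j * X k l) := by
      intro i j k l
      rw [cH, MeasureTheory.setAverage_eq, smul_eq_mul,
        MeasureTheory.integral_mul_const, MeasureTheory.integral_mul_const]
      rw [measureReal_def]
      ring
    have A1 : ∀ i j k : Fin 3, (∫ x in cube xα δ, ∑ l,
        (((∑ n, ∑ h, c i j n h x * pd (P k l n) h x)
          + ∑ h, e h i j x * pd (Φ k l) h x) * X i j * X k l))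
        = ∑ l, ∫ x in cube xα δ,
        (((∑ n, ∑ h, c i j n h x * pd (P k l n) h x)
          + ∑ h, e h i j x * pd (Φ k l) h x) * X i j * X k l) :=
      fun i j k => MeasureTheory.integral_finset_sum _ fun l _ => hintf i j k l
    have A2 : ∀ i j : Fin 3, (∫ x in cube xα δ, ∑ k, ∑ l,
        (((∑ n, ∑ h, c i j n h x * pd (P k l n) h x)
          + ∑ h, e h i j x * pd (Φ k l) h x) * X i j * X k l))
        = ∑ k, ∫ x in cube xα δ, ∑ l,
        (((∑ n, ∑ h, c i j n h x * pd (P k l n) h x)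
          + ∑ h, e h i j x * pd (Φ k l) h x) * X i j * X k l) :=
      fun i j => MeasureTheory.integral_finset_sum _ fun k _ =>
        MeasureTheory.integrable_finset_sum _ fun l _ => hintf i j k l
    have A3 : ∀ i : Fin 3, (∫ x in cube xα δ, ∑ j, ∑ k, ∑ l,
        (((∑ n, ∑ h, c i j n h x * pd (P k l n) h x)
          + ∑ h, e h i j x * pd (Φ k l) h x) * X i j * X k l))
        = ∑ j, ∫ x in cube xα δ, ∑ k, ∑ l,
        (((∑ n, ∑ h, c i j n h x * pd (P k l n) h x)
          + ∑ h, e h i j x * pd (Φ k l) h x) * X i j * X k l) :=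
      fun i => MeasureTheory.integral_finset_sum _ fun j _ =>
        MeasureTheory.integrable_finset_sum _ fun k _ =>
          MeasureTheory.integrable_finset_sum _ fun l _ => hintf i j k l
    have A4 : (∫ x in cube xα δ, ∑ i, ∑ j, ∑ k, ∑ l,
        (((∑ n, ∑ h, c i j n h x * pd (P k l n) h x)
          + ∑ h, e h i j x * pd (Φ k l) h x) * X i j * X k l))
        = ∑ i, ∫ x in cube xα δ, ∑ j, ∑ k, ∑ l,
        (((∑ n, ∑ h, c i j n h x * pd (P k l n) h x)
          + ∑ h, e h i j x * pd (Φ k l) h x) * X i j * X k l) :=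
      MeasureTheory.integral_finset_sum _ fun i _ =>
        MeasureTheory.integrable_finset_sum _ fun j _ =>
          MeasureTheory.integrable_finset_sum _ fun k _ =>
            MeasureTheory.integrable_finset_sum _ fun l _ => hintf i j k l
    have hsum : (∑ i, ∑ j, ∑ k, ∑ l, cH c e (cube xα δ) P Φ i j k l * X i j * X k l)
        = (volume (cube xα δ)).toReal⁻¹ * ∫ x in cube xα δ,
            (∑ i, ∑ j, ∑ k, ∑ l, (((∑ n, ∑ h, c i j n h x * pd (P k l n) h x)
              + ∑ h, e h i j x * pd (Φ k l) h x) * X i j * X k l)) := by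
      simp only [hterm, A4, A3, A2, A1, Finset.mul_sum]
    rw [hsum]
    have h2 := mul_le_mul_of_nonneg_left key (inv_nonneg.2 hmpos.le)
    refine le_trans (le_of_eq ?_) h2
    field_simp
  · -- dielectric part
    refine ⟨β, hβ, fun v => ?_⟩
    -- decomposition of the gradients of Ψ
    have hpdΨ : ∀ l i x, pd (Ψ l) i x
        = pd (fun y => Ψ l y - y l) i x + (if l = i then (1:ℝ) else 0) := by
      intro l i x
      rw [← pd_coord l i x, ← pd_add (hΨbc l).1 (differentiable_coord l)]
      congr 1
      funext y
      ring
    have hΨL2 : ∀ l i, L2 (cube xα δ) (pd (Ψ l) i) := by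
      intro l i
      have hh : pd (Ψ l) i = fun x =>
          pd (fun y => Ψ l y - y l) i x + (if l = i then (1:ℝ) else 0) :=
        funext (hpdΨ l i)
      rw [hh]
      exact ((hΨbc l).l2pd i).add (L2.const _ hfin _)
    have hQL2 : ∀ l n h, L2 (cube xα δ) (pd (Q l n) h) := fun l n h => (hQbc l n).l2pd h
    have hDQ : ∀ l i, L2 (cube xα δ) (fun x =>
        (∑ n, ∑ h, e i n h x * pd (Q l n) h x) - ∑ h, ϵ i h x * pd (Ψ l) h x) :=
      fun l i => L2.sub
        (L2.sum Finset.univ _ fun n _ => L2.sum Finset.univ _ fun h _ =>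
          L2.bddMul (he i n h) (hQL2 l n h))
        (L2.sum Finset.univ _ fun h _ => L2.bddMul (hϵ i h) (hΨL2 l h))
    -- combined fields
    have hwH : ∀ n, H10 (cube xα δ) (fun x => ∑ l, v l * Q l n x) :=
      fun n => H10.sum Finset.univ _ fun l _ => (hQbc l n).const_mul (v l)
    have hψH : H10 (cube xα δ) (fun x => ∑ l, v l * (Ψ l x - x l)) :=
      H10.sum Finset.univ _ fun l _ => (hΨbc l).const_mul (v l)
    have hpdU2 : ∀ n h x, pd (fun y => ∑ l, v l * Q l n y) h x
        = ∑ l, v l * pd (Q l n) h x :=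
      fun n h x => pd_lin1 (fun l => Q l n) v (fun l => (hQbc l n).1) h x
    have hpdφ2 : ∀ i x, pd (fun y => ∑ l, v l * Ψ l y) i x
        = ∑ l, v l * pd (Ψ l) i x :=
      fun i x => pd_lin1 (fun l => Ψ l) v (fun l => hΨreg l) i x
    have hpdψ2 : ∀ i x, pd (fun y => ∑ l, v l * (Ψ l y - y l)) i x
        = ∑ l, v l * pd (fun y => Ψ l y - y l) i x :=
      fun i x => pd_lin1 (fun l => fun y => Ψ l y - y l) v (fun l => (hΨbc l).1) i x
    have hUw : ∀ n h x, pd (fun y => ∑ l, v l * Q l n y) h x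
        = pd (fun y => ∑ l, v l * Q l n y) h x + (fun _ _ : Fin 3 => (0:ℝ)) n h :=
      fun n h x => by simp
    have hφψ : ∀ i x, pd (fun y => ∑ l, v l * Ψ l y) i x
        = pd (fun y => ∑ l, v l * (Ψ l y - y l)) i x + v i := by
      intro i x
      rw [hpdφ2 i x, hpdψ2 i x]
      have e1 : ∀ l, v l * pd (Ψ l) i x
          = v l * pd (fun y => Ψ l y - y l) i x + v l * (if l = i then (1:ℝ) else 0) := by
        intro l; rw [hpdΨ l i x]; ring
      calc ∑ l, v l * pd (Ψ l) i x
          = ∑ l, (v l * pd (fun y => Ψ l y - y l) i x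
            + v l * (if l = i then (1:ℝ) else 0)) :=
            Finset.sum_congr rfl fun l _ => e1 l
        _ = (∑ l, v l * pd (fun y => Ψ l y - y l) i x)
            + ∑ l, v l * (if l = i then (1:ℝ) else 0) := Finset.sum_add_distrib
        _ = _ := by
            simp [mul_ite, mul_one, mul_zero, Finset.sum_ite_eq', Finset.mem_univ]
    -- weak forms for combined fields
    have hσQ : ∀ l i j, L2 (cube xα δ) (fun x =>
        (∑ n, ∑ h, c i j n h x * pd (Q l n) h x) + ∑ h, e h i j x * pd (Ψ l) h x) :=
      fun l i j => L2.add
        (L2.sum Finset.univ _ fun n _ => L2.sum Finset.univ _ fun h _ =>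
          L2.bddMul (hc i j n h) (hQL2 l n h))
        (L2.sum Finset.univ _ fun h _ => L2.bddMul (he h i j) (hΨL2 l h))
    have hint1 : ∀ i' l (g : (Fin 3 → ℝ) → ℝ), H10 (cube xα δ) g →
        IntegrableOn (fun x => ∑ j, ((∑ n, ∑ h, c i' j n h x * pd (Q l n) h x)
          + ∑ h, e h i' j x * pd (Ψ l) h x) * pd g j x) (cube xα δ) :=
      fun i' l g hg => MeasureTheory.integrable_finset_sum _ fun j _ =>
        (hσQ l i' j).mul (hg.l2pd j)
    have weak1 : ∀ i' g, H10 (cube xα δ) g →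
        ∫ x in cube xα δ, (∑ j, ((∑ n, ∑ h, c i' j n h x *
            pd (fun y => ∑ l, v l * Q l n y) h x)
          + ∑ h, e h i' j x * pd (fun y => ∑ l, v l * Ψ l y) h x)
            * pd g j x) = 0 := by
      intro i' g hg
      have hptw : (fun x => ∑ j, ((∑ n, ∑ h, c i' j n h x *
            pd (fun y => ∑ l, v l * Q l n y) h x)
          + ∑ h, e h i' j x * pd (fun y => ∑ l, v l * Ψ l y) h x)
            * pd g j x)
          = fun x => ∑ l, v l * (∑ j, ((∑ n, ∑ h, c i' j n h x * pd (Q l n) h x)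
          + ∑ h, e h i' j x * pd (Ψ l) h x) * pd g j x) := by
        funext x
        simp only [hpdU2, hpdφ2]
        exact comb1s (fun j n h => c i' j n h x) (fun j h => e h i' j x) v
          (fun l n h => pd (Q l n) h x) (fun l h => pd (Ψ l) h x)
          (fun j => pd g j x)
      rw [hptw]
      rw [MeasureTheory.integral_finset_sum _ (fun l _ =>
        (hint1 i' l g hg).const_mul (v l))]
      refine Finset.sum_eq_zero fun l _ => ?_
      rw [MeasureTheory.integral_const_mul, hQ1 l i' g hg, mul_zero]
    have hint2 : ∀ l (g : (Fin 3 → ℝ) → ℝ), H10 (cube xα δ) g →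
        IntegrableOn (fun x => ∑ i', ((∑ n, ∑ h, e i' n h x * pd (Q l n) h x)
          - ∑ h, ϵ i' h x * pd (Ψ l) h x) * pd g i' x) (cube xα δ) :=
      fun l g hg => MeasureTheory.integrable_finset_sum _ fun i' _ =>
        (hDQ l i').mul (hg.l2pd i')
    have weak2 : ∀ g, H10 (cube xα δ) g →
        ∫ x in cube xα δ, (∑ i', ((∑ n, ∑ h, e i' n h x *
            pd (fun y => ∑ l, v l * Q l n y) h x)
          - ∑ h, ϵ i' h x * pd (fun y => ∑ l, v l * Ψ l y) h x)
            * pd g i' x) = 0 := by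
      intro g hg
      have hptw : (fun x => ∑ i', ((∑ n, ∑ h, e i' n h x *
            pd (fun y => ∑ l, v l * Q l n y) h x)
          - ∑ h, ϵ i' h x * pd (fun y => ∑ l, v l * Ψ l y) h x)
            * pd g i' x)
          = fun x => ∑ l, v l * (∑ i', ((∑ n, ∑ h, e i' n h x * pd (Q l n) h x)
          - ∑ h, ϵ i' h x * pd (Ψ l) h x) * pd g i' x) := by
        funext x
        simp only [hpdU2, hpdφ2]
        exact comb2s (fun i' n h => e i' n h x) (fun i' h => ϵ i' h x) v
          (fun l n h => pd (Q l n) h x) (fun l h => pd (Ψ l) h x)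
          (fun i' => pd g i' x)
      rw [hptw]
      rw [MeasureTheory.integral_finset_sum _ (fun l _ =>
        (hint2 l g hg).const_mul (v l))]
      refine Finset.sum_eq_zero fun l _ => ?_
      rw [MeasureTheory.integral_const_mul, hQ2 l g hg, mul_zero]
    -- apply the master estimate
    have key := master hc he hϵ hcsym hcell hϵell hα hβ xα hδ
      (fun n => fun x => ∑ l, v l * Q l n x)
      (fun x => ∑ l, v l * Ψ l x)
      (fun n => fun x => ∑ l, v l * Q l n x)
      (fun _ _ => (0:ℝ))
      (fun x => ∑ l, v l * (Ψ l x - x l))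
      v
      hwH hψH hUw hφψ weak1 weak2
    -- simplify `key`
    have hz : (((0:ℝ) + 0) / 2) ^ 2 = 0 := by norm_num
    simp only [hz, mul_zero, Finset.sum_const_zero, zero_add, zero_sub] at key
    -- `key` now reads m * (β * ∑ v²) ≤ ∫ -(∑ i D i x * v i)
    have hRX : (∫ x in cube xα δ, -(∑ i, ((∑ n, ∑ h, e i n h x *
          pd (fun y => ∑ l, v l * Q l n y) h x)
        - ∑ h, ϵ i h x * pd (fun y => ∑ l, v l * Ψ l y) h x) * v i))
        = ∫ x in cube xα δ, (∑ i, ∑ l,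
          (-(((∑ n, ∑ h, e i n h x * pd (Q l n) h x)
            - ∑ h, ϵ i h x * pd (Ψ l) h x) * v i * v l))) := by
      congr 1
      funext x
      simp only [hpdU2, hpdφ2]
      rw [← comb7 (fun i n h => e i n h x) (fun i h => ϵ i h x) v
        (fun l n h => pd (Q l n) h x) (fun l h => pd (Ψ l) h x)]
      rw [← Finset.sum_neg_distrib]
      refine Finset.sum_congr rfl fun i _ => ?_
      rw [← Finset.sum_neg_distrib]
    rw [hRX] at key
    -- express the effective dielectric sum as an integral
    have hintg : ∀ i l : Fin 3, IntegrableOn (fun x =>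
        -(((∑ n, ∑ h, e i n h x * pd (Q l n) h x)
          - ∑ h, ϵ i h x * pd (Ψ l) h x) * v i * v l)) (cube xα δ) :=
      fun i l => ((((hDQ l i).integrableOn hfin).mul_const (v i)).mul_const (v l)).neg
    have hterm : ∀ i l : Fin 3, epsH e ϵ (cube xα δ) Q Ψ i l * v i * v l
        = (volume (cube xα δ)).toReal⁻¹ * ∫ x in cube xα δ,
            (-(((∑ n, ∑ h, e i n h x * pd (Q l n) h x)
              - ∑ h, ϵ i h x * pd (Ψ l) h x) * v i * v l)) := by
      intro i l
      rw [epsH, MeasureTheory.setAverage_eq, smul_eq_mul, MeasureTheory.integral_neg,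
        MeasureTheory.integral_mul_const, MeasureTheory.integral_mul_const]
      rw [measureReal_def]
      ring
    have A1 : ∀ i : Fin 3, (∫ x in cube xα δ, ∑ l,
        (-(((∑ n, ∑ h, e i n h x * pd (Q l n) h x)
          - ∑ h, ϵ i h x * pd (Ψ l) h x) * v i * v l)))
        = ∑ l, ∫ x in cube xα δ,
          (-(((∑ n, ∑ h, e i n h x * pd (Q l n) h x)
            - ∑ h, ϵ i h x * pd (Ψ l) h x) * v i * v l)) :=
      fun i => MeasureTheory.integral_finset_sum _ fun l _ => hintg i l
    have A2 : (∫ x in cube xα δ, ∑ i, ∑ l,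
        (-(((∑ n, ∑ h, e i n h x * pd (Q l n) h x)
          - ∑ h, ϵ i h x * pd (Ψ l) h x) * v i * v l)))
        = ∑ i, ∫ x in cube xα δ, ∑ l,
          (-(((∑ n, ∑ h, e i n h x * pd (Q l n) h x)
            - ∑ h, ϵ i h x * pd (Ψ l) h x) * v i * v l)) :=
      MeasureTheory.integral_finset_sum _ fun i _ =>
        MeasureTheory.integrable_finset_sum _ fun l _ => hintg i l
    have hsum : (∑ i, ∑ l, epsH e ϵ (cube xα δ) Q Ψ i l * v i * v l)
        = (volume (cube xα δ)).toReal⁻¹ * ∫ x in cube xα δ,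
            (∑ i, ∑ l, (-(((∑ n, ∑ h, e i n h x * pd (Q l n) h x)
              - ∑ h, ϵ i h x * pd (Ψ l) h x) * v i * v l))) := by
      simp only [hterm, A2, A1, Finset.mul_sum]
    rw [hsum]
    have h2 := mul_le_mul_of_nonneg_left key (inv_nonneg.2 hmpos.le)
    refine le_trans (le_of_eq ?_) h2
    field_simp
    simp
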